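/- Let n ≥ k ≥ 2 be integers. In the integral group ring ℤ[Σ_n], with a = Σ_σ sgn(σ)·σ summed over permutations fixing each of k+1, …, n, and b = Σ_τ τ summed over permutations fixing each of 2, …, k, the ℤ-submodule ℤ[Σ_n]·(a·b) spanned by the elements g·a·b for g ∈ Σ_n is a free abelian group of rank binom(n−1, k−1). -/

import Mathlib

/-- The antisymmetrizer `a = Σ_σ sgn(σ)·σ ∈ ℤ[Σₙ]` over permutations of `{1,…,n}` fixing
each of `k+1,…,n` (in zero-based indexing: fixing every index `≥ k`). -/
noncomputable def hookA (n k : ℕ) : MonoidAlgebra ℤ (Equiv.Perm (Fin n)) :=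
  ∑ σ ∈ Finset.univ.filter (fun σ : Equiv.Perm (Fin n) => ∀ i : Fin n, k ≤ (i : ℕ) → σ i = i),
    MonoidAlgebra.single σ ((Equiv.Perm.sign σ : ℤ))

/-- The symmetrizer `b = Σ_τ τ ∈ ℤ[Σₙ]` over permutations of `{1,…,n}` fixing each of
`2,…,k` (in zero-based indexing: fixing every index `i` with `1 ≤ i < k`). -/
noncomputable def hookB (n k : ℕ) : MonoidAlgebra ℤ (Equiv.Perm (Fin n)) :=
  ∑ τ ∈ Finset.univ.filter
      (fun τ : Equiv.Perm (Fin n) => ∀ i : Fin n, 1 ≤ (i : ℕ) → (i : ℕ) < k → τ i = i),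
    MonoidAlgebra.single τ (1 : ℤ)

open Finset Equiv Equiv.Perm MonoidAlgebra

namespace HookAux
variable {n k : ℕ}

def pA (n k : ℕ) (σ : Perm (Fin n)) : Prop := ∀ i : Fin n, k ≤ (i : ℕ) → σ i = i
def pB (n k : ℕ) (τ : Perm (Fin n)) : Prop := ∀ i : Fin n, 1 ≤ (i : ℕ) → (i : ℕ) < k → τ i = i
def pC (n k : ℕ) (ρ : Perm (Fin n)) : Prop := ∀ i : Fin n, (i : ℕ) < k → ρ i = i

def AF (n k : ℕ) : Finset (Perm (Fin n)) :=
  Finset.univ.filter (fun σ : Perm (Fin n) => ∀ i : Fin n, k ≤ (i : ℕ) → σ i = i)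
def BF (n k : ℕ) : Finset (Perm (Fin n)) :=
  Finset.univ.filter
    (fun τ : Perm (Fin n) => ∀ i : Fin n, 1 ≤ (i : ℕ) → (i : ℕ) < k → τ i = i)

lemma hookA_eq : hookA n k = ∑ σ ∈ AF n k, MonoidAlgebra.single σ ((Equiv.Perm.sign σ : ℤ)) := rfl
lemma hookB_eq : hookB n k = ∑ τ ∈ BF n k, MonoidAlgebra.single τ (1 : ℤ) := rfl

lemma mem_AF {σ : Perm (Fin n)} : σ ∈ AF n k ↔ pA n k σ := by simp [AF, pA]
lemma mem_BF {τ : Perm (Fin n)} : τ ∈ BF n k ↔ pB n k τ := by simp [BF, pB]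

lemma pA_one : pA n k 1 := fun _ _ => rfl
lemma pB_one : pB n k 1 := fun _ _ _ => rfl
lemma pA_mul {σ σ' : Perm (Fin n)} (h : pA n k σ) (h' : pA n k σ') : pA n k (σ * σ') := by
  intro i hi; simp [Perm.mul_apply, h' i hi, h i hi]
lemma pB_mul {σ σ' : Perm (Fin n)} (h : pB n k σ) (h' : pB n k σ') : pB n k (σ * σ') := by
  intro i h1 h2; simp [Perm.mul_apply, h' i h1 h2, h i h1 h2]
lemma pA_inv {σ : Perm (Fin n)} (h : pA n k σ) : pA n k σ⁻¹ := by
  intro i hi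
  have := congrArg (fun x => σ⁻¹ x) (h i hi)
  simpa using this.symm
lemma pB_inv {τ : Perm (Fin n)} (h : pB n k τ) : pB n k τ⁻¹ := by
  intro i h1 h2
  have := congrArg (fun x => τ⁻¹ x) (h i h1 h2)
  simpa using this.symm
lemma pA_lt {σ : Perm (Fin n)} (h : pA n k σ) {i : Fin n} (hi : (i : ℕ) < k) :
    ((σ i : Fin n) : ℕ) < k := by
  by_contra hge
  push_neg at hge
  have h2 := σ.injective (h (σ i) hge)
  rw [h2] at hge; omega
lemma pC_ge {ρ : Perm (Fin n)} (h : pC n k ρ) {i : Fin n} (hi : k ≤ (i : ℕ)) :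
    k ≤ ((ρ i : Fin n) : ℕ) := by
  by_contra hlt
  push_neg at hlt
  have h2 := ρ.injective (h (ρ i) hlt)
  rw [h2] at hlt; omega

/-- left multiplication by an element of the column group -/
lemma single_mul_hookA {σ0 : Perm (Fin n)} (h : pA n k σ0) :
    MonoidAlgebra.single σ0 (1:ℤ) * hookA n k
      = ((Equiv.Perm.sign σ0 : ℤ)) • hookA n k := by
  rw [hookA_eq, Finset.mul_sum, Finset.smul_sum]
  refine Finset.sum_equiv (Equiv.mulLeft σ0) (fun σ => ?_) ?_
  · constructor
    · intro hσ
      exact mem_AF.2 (pA_mul h (mem_AF.1 hσ))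
    · intro hσ
      have : σ = σ0⁻¹ * (σ0 * σ) := by group
      rw [this]
      exact mem_AF.2 (pA_mul (pA_inv h) (mem_AF.1 hσ))
  · intro σ hσ
    rw [MonoidAlgebra.single_mul_single, one_mul]
    rcases Int.units_eq_one_or (Equiv.Perm.sign σ0) with hs | hs <;>
      simp [hs, Finsupp.smul_single, Equiv.Perm.sign_mul]

/-- left multiplication by an element of the row group -/
lemma single_mul_hookB {τ0 : Perm (Fin n)} (h : pB n k τ0) :
    MonoidAlgebra.single τ0 (1:ℤ) * hookB n k = hookB n k := by
  rw [hookB_eq, Finset.mul_sum]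
  refine Finset.sum_equiv (Equiv.mulLeft τ0) (fun τ => ?_) ?_
  · constructor
    · intro hτ
      exact mem_BF.2 (pB_mul h (mem_BF.1 hτ))
    · intro hτ
      have : τ = τ0⁻¹ * (τ0 * τ) := by group
      rw [this]
      exact mem_BF.2 (pB_mul (pB_inv h) (mem_BF.1 hτ))
  · intro τ hτ
    rw [MonoidAlgebra.single_mul_single, one_mul]
    rfl

/-- elements fixing all of `{0,…,k-1}` commute with `hookA` -/
lemma single_comm_hookA {ρ : Perm (Fin n)} (h : pC n k ρ) :
    MonoidAlgebra.single ρ (1:ℤ) * hookA n k = hookA n k * MonoidAlgebra.single ρ (1:ℤ) := by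
  rw [hookA_eq, Finset.mul_sum, Finset.sum_mul]
  refine Finset.sum_congr rfl ?_
  intro σ hσ
  have hA := mem_AF.1 hσ
  rw [MonoidAlgebra.single_mul_single, MonoidAlgebra.single_mul_single, one_mul, mul_one]
  congr 1
  ext x
  simp only [Perm.mul_apply]
  rcases lt_or_ge ((x : Fin n) : ℕ) k with hx | hx
  · rw [h x hx, h (σ x) (pA_lt hA hx)]
  · rw [hA x hx, hA (ρ x) (pC_ge h hx)]

/-! ### The extended antisymmetrizer over `{0,…,k-1} ∪ {m}` -/

def JK (n k : ℕ) : Finset (Fin n) := Finset.univ.filter (fun j : Fin n => (j : ℕ) < k)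

def APF (n k : ℕ) (m : Fin n) : Finset (Perm (Fin n)) :=
  Finset.univ.filter (fun σ : Perm (Fin n) => ∀ i : Fin n, k ≤ (i : ℕ) → i ≠ m → σ i = i)

def pP (n k : ℕ) (m : Fin n) (σ : Perm (Fin n)) : Prop :=
  ∀ i : Fin n, k ≤ (i : ℕ) → i ≠ m → σ i = i

noncomputable def aP (n k : ℕ) (m : Fin n) : MonoidAlgebra ℤ (Equiv.Perm (Fin n)) :=
  ∑ σ ∈ APF n k m, MonoidAlgebra.single σ ((Equiv.Perm.sign σ : ℤ))

lemma mem_APF {m : Fin n} {σ : Perm (Fin n)} : σ ∈ APF n k m ↔ pP n k m σ := by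
  simp [APF, pP]

lemma pP_mul {m : Fin n} {σ σ' : Perm (Fin n)} (h : pP n k m σ) (h' : pP n k m σ') :
    pP n k m (σ * σ') := by
  intro i hi hi'; simp [Perm.mul_apply, h' i hi hi', h i hi hi']

lemma pP_inv {m : Fin n} {σ : Perm (Fin n)} (h : pP n k m σ) : pP n k m σ⁻¹ := by
  intro i hi hi'
  have := congrArg (fun x => σ⁻¹ x) (h i hi hi')
  simpa using this.symm

lemma pA_pP {m : Fin n} {σ : Perm (Fin n)} (h : pA n k σ) : pP n k m σ :=
  fun i hi _ => h i hi

lemma pP_swap {m j : Fin n} (hj : (j : ℕ) < k) : pP n k m (Equiv.swap j m) := by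
  intro i hi hi'
  refine Equiv.swap_apply_of_ne_of_ne ?_ hi'
  intro hij; rw [hij] at hi; omega

lemma swap_ne {m j : Fin n} (hm : k ≤ (m : ℕ)) (hj : (j : ℕ) < k) : j ≠ m := by
  intro h; rw [h] at hj; omega

/-- coset decomposition of the extended antisymmetrizer -/
lemma aP_decomp {m : Fin n} (hm : k ≤ (m : ℕ)) :
    aP n k m = hookA n k
      - ∑ j ∈ JK n k, MonoidAlgebra.single (Equiv.swap j m) (1:ℤ) * hookA n k := by
  have hmaps : ∀ σ ∈ APF n k m, σ m ∈ insert m (JK n k) := by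
    intro σ hσ
    have hσ' := mem_APF.1 hσ
    rcases eq_or_ne (σ m) m with h | h
    · simp [h]
    · rcases lt_or_ge ((σ m : Fin n) : ℕ) k with h2 | h2
      · simp [JK, Finset.mem_insert, h2]
      · exact absurd (σ.injective (hσ' (σ m) h2 h)) h
  have hsplit := Finset.sum_fiberwise_of_maps_to hmaps
      (fun σ => MonoidAlgebra.single σ ((Equiv.Perm.sign σ : ℤ)))
  have hmJ : m ∉ JK n k := by simp only [JK, Finset.mem_filter]; push_neg; intro _; omega
  rw [aP, ← hsplit, Finset.sum_insert hmJ]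
  have hfm : (APF n k m).filter (fun σ => σ m = m) = AF n k := by
    ext σ
    simp only [Finset.mem_filter, mem_AF]
    constructor
    · rintro ⟨hσ, hσm⟩
      intro i hi
      rcases eq_or_ne i m with rfl | h
      · exact hσm
      · exact mem_APF.1 hσ i hi h
    · intro hσ
      exact ⟨mem_APF.2 (pA_pP hσ), hσ m hm⟩
  have hfj : ∀ j ∈ JK n k,
      ∑ σ ∈ (APF n k m).filter (fun σ => σ m = j),
          MonoidAlgebra.single σ ((Equiv.Perm.sign σ : ℤ))
        = - (MonoidAlgebra.single (Equiv.swap j m) (1:ℤ) * hookA n k) := by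
    intro j hj
    have hjk : (j : ℕ) < k := by
      simpa [JK] using hj
    have hjm : j ≠ m := swap_ne hm hjk
    have step1 : ∑ σ' ∈ AF n k,
        MonoidAlgebra.single (Equiv.swap j m * σ')
          ((Equiv.Perm.sign (Equiv.swap j m * σ') : ℤ))
        = ∑ σ ∈ (APF n k m).filter (fun σ => σ m = j),
          MonoidAlgebra.single σ ((Equiv.Perm.sign σ : ℤ)) := by
      refine Finset.sum_equiv (Equiv.mulLeft (Equiv.swap j m)) (fun σ' => ?_) ?_
      · simp only [Equiv.coe_mulLeft, Finset.mem_filter, mem_AF, mem_APF]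
        constructor
        · intro hA'
          refine ⟨pP_mul (pP_swap hjk) (pA_pP hA'), ?_⟩
          rw [Perm.mul_apply, hA' m hm, Equiv.swap_apply_right]
        · rintro ⟨h1, h2⟩
          intro i hi
          have key : σ' i = Equiv.swap j m ((Equiv.swap j m * σ') i) := by
            simp [Perm.mul_apply, Equiv.swap_apply_self]
          by_cases h : i = m
          · rw [key, h, h2, Equiv.swap_apply_left]
          · rw [key, h1 i hi h]
            refine Equiv.swap_apply_of_ne_of_ne ?_ h
            intro hij; rw [hij] at hi; omega
      · intro σ' _
        simp [Equiv.coe_mulLeft]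
    rw [← step1, hookA_eq, Finset.mul_sum, ← Finset.sum_neg_distrib]
    refine Finset.sum_congr rfl ?_
    intro σ' _
    rw [MonoidAlgebra.single_mul_single, one_mul, ← MonoidAlgebra.single_neg]
    congr 1
    rw [Equiv.Perm.sign_mul, Equiv.Perm.sign_swap hjm]
    push_cast
    ring

  rw [hfm, Finset.sum_congr rfl hfj, Finset.sum_neg_distrib, sub_eq_add_neg, ← hookA_eq]

/-- the extended antisymmetrizer kills the symmetrizer -/
lemma aP_mul_hookB (hk : 2 ≤ k) (hkn : k ≤ n) {m : Fin n} (hm : k ≤ (m : ℕ)) :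
    aP n k m * hookB n k = 0 := by
  have hn0 : 0 < n := by omega
  set z : Fin n := ⟨0, hn0⟩ with hzdef
  have hzm : z ≠ m := by
    intro h
    have : (z : ℕ) = (m : ℕ) := by rw [h]
    simp [hzdef] at this
    omega
  set s : Perm (Fin n) := Equiv.swap z m with hsdef
  -- s is in the row group
  have hsB : pB n k s := by
    intro i h1 h2
    refine Equiv.swap_apply_of_ne_of_ne ?_ ?_
    · intro h; rw [h] at h1; simp [hzdef] at h1
    · intro h; rw [h] at h2; omega
  -- right multiplication by s negates aP
  have step1 : aP n k m * MonoidAlgebra.single s (1:ℤ) = - aP n k m := by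
    rw [aP, Finset.sum_mul, ← Finset.sum_neg_distrib]
    refine Finset.sum_equiv (Equiv.mulRight s) (fun σ => ?_) ?_
    · simp only [Equiv.coe_mulRight, mem_APF]
      have hsP : pP n k m s := by
        intro i hi hi'
        refine Equiv.swap_apply_of_ne_of_ne ?_ hi'
        intro h; rw [h] at hi; simp [hzdef] at hi; omega
      constructor
      · intro h; exact pP_mul h hsP
      · intro h
        have heq : σ = σ * s * s := by
          rw [mul_assoc, hsdef, Equiv.swap_mul_self, mul_one]
        rw [heq]
        exact pP_mul h hsP
    · intro σ _
      rw [MonoidAlgebra.single_mul_single, mul_one, Equiv.coe_mulRight, ← MonoidAlgebra.single_neg]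
      congr 1
      rw [Equiv.Perm.sign_mul, hsdef, Equiv.Perm.sign_swap hzm]
      push_cast
      ring
  have step2 : MonoidAlgebra.single s (1:ℤ) * hookB n k = hookB n k := single_mul_hookB hsB
  have key : aP n k m * hookB n k = - (aP n k m * hookB n k) := by
    calc aP n k m * hookB n k
        = aP n k m * (MonoidAlgebra.single s (1:ℤ) * hookB n k) := by rw [step2]
      _ = (aP n k m * MonoidAlgebra.single s (1:ℤ)) * hookB n k := by rw [mul_assoc]
      _ = - aP n k m * hookB n k := by rw [step1]
      _ = - (aP n k m * hookB n k) := by rw [neg_mul]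
  apply MonoidAlgebra.ext
  apply Finsupp.ext
  intro g
  have := congrFun (congrArg (fun x : MonoidAlgebra ℤ (Perm (Fin n)) => ⇑x.coeff) key) g
  have h2 : (aP n k m * hookB n k).coeff g = - (aP n k m * hookB n k).coeff g := by
    simpa [MonoidAlgebra.coeff_neg, Finsupp.neg_apply] using this
  simp only [MonoidAlgebra.coeff_zero, Finsupp.coe_zero, Pi.zero_apply]
  omega

/-- the Garnir-type straightening relation -/
lemma hookAB_rel (hk : 2 ≤ k) (hkn : k ≤ n) {m : Fin n} (hm : k ≤ (m : ℕ)) :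
    hookA n k * hookB n k
      = ∑ j ∈ JK n k,
          MonoidAlgebra.single (Equiv.swap j m) (1:ℤ) * (hookA n k * hookB n k) := by
  have h0 := aP_mul_hookB hk hkn hm
  rw [aP_decomp hm, sub_mul, Finset.sum_mul, sub_eq_zero] at h0
  refine h0.trans (Finset.sum_congr rfl ?_)
  intro j _
  rw [mul_assoc]

/-- left translate by `h * σ0` versus by `h`, for `σ0` in the column group -/
lemma translate_col {h σ0 : Perm (Fin n)} (hσ0 : pA n k σ0) :
    MonoidAlgebra.single (h * σ0) (1:ℤ) * (hookA n k * hookB n k)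
      = ((Equiv.Perm.sign σ0 : ℤ)) •
          (MonoidAlgebra.single h (1:ℤ) * (hookA n k * hookB n k)) := by
  have h1 : MonoidAlgebra.single (h * σ0) (1:ℤ)
      = MonoidAlgebra.single h (1:ℤ) * MonoidAlgebra.single σ0 (1:ℤ) := by
    rw [MonoidAlgebra.single_mul_single, mul_one]
  rw [h1, mul_assoc, ← mul_assoc (MonoidAlgebra.single σ0 (1:ℤ)), single_mul_hookA hσ0,
    smul_mul_assoc, mul_smul_comm]

/-- left translates by permutations agreeing on `{0,…,k-1}` coincide -/
lemma translate_eq {h h' : Perm (Fin n)} (hagree : ∀ i : Fin n, (i : ℕ) < k → h i = h' i) :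
    MonoidAlgebra.single h (1:ℤ) * (hookA n k * hookB n k)
      = MonoidAlgebra.single h' (1:ℤ) * (hookA n k * hookB n k) := by
  set ρ : Perm (Fin n) := h⁻¹ * h' with hρdef
  have hρ : pC n k ρ := by
    intro i hi
    rw [hρdef, Perm.mul_apply, ← hagree i hi]; exact h.symm_apply_apply i
  have h1 : MonoidAlgebra.single h' (1:ℤ)
      = MonoidAlgebra.single h (1:ℤ) * MonoidAlgebra.single ρ (1:ℤ) := by
    rw [MonoidAlgebra.single_mul_single, mul_one, hρdef, ← mul_assoc, mul_inv_cancel, one_mul]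
  rw [h1, mul_assoc]
  congr 1
  rw [← mul_assoc, single_comm_hookA hρ, mul_assoc, single_mul_hookB (fun i h1 h2 => hρ i h2)]

lemma card_ltk (hkn : k ≤ n) : Fintype.card {i : Fin n // (i : ℕ) < k} = k := by
  let e : {i : Fin n // (i : ℕ) < k} ≃ Fin k :=
    { toFun := fun x => ⟨(x : Fin n), x.2⟩
      invFun := fun j => ⟨⟨(j : ℕ), lt_of_lt_of_le j.2 hkn⟩, j.2⟩
      left_inv := fun x => by ext; rfl
      right_inv := fun j => by ext; rfl }
  rw [Fintype.card_congr e, Fintype.card_fin]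

lemma exists_gS (hk : 2 ≤ k) (hkn : k ≤ n) [NeZero n] (s : Finset (Fin n))
    (hs : s.card = k - 1) (h0 : (0 : Fin n) ∉ s) :
    ∃ g : Perm (Fin n), g 0 = 0 ∧ ∀ i : Fin n, (i : ℕ) < k ↔ g i ∈ insert (0 : Fin n) s := by
  have hcard : (insert (0 : Fin n) s).card = k := by
    rw [Finset.card_insert_of_notMem h0, hs]; omega
  have h1 : Fintype.card {i : Fin n // (i : ℕ) < k}
      = Fintype.card {x : Fin n // x ∈ insert (0 : Fin n) s} := by
    rw [card_ltk hkn, Fintype.card_coe, hcard]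
  have h0k : ((0 : Fin n) : ℕ) < k := by
    simp [Fin.val_zero]; omega
  let e0 := Fintype.equivOfCardEq h1
  let z0 : {i : Fin n // (i : ℕ) < k} := ⟨0, h0k⟩
  let w0 : {x : Fin n // x ∈ insert (0 : Fin n) s} := ⟨0, Finset.mem_insert_self _ _⟩
  let e := (Equiv.swap z0 (e0.symm w0)).trans e0
  have he : e z0 = w0 := by
    simp [e, Equiv.swap_apply_left]
  refine ⟨e.extendSubtype, ?_, ?_⟩
  · have := e.extendSubtype_apply_of_mem 0 h0k
    rw [this]
    have : (⟨(0:Fin n), h0k⟩ : {i : Fin n // (i : ℕ) < k}) = z0 := rfl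
    rw [this, he]
  · intro i
    constructor
    · intro hi
      have := e.extendSubtype_apply_of_mem i hi
      rw [this]
      exact (e ⟨i, hi⟩).2
    · intro hmem
      by_contra hi
      exact e.extendSubtype_not_mem i hi hmem

lemma hookAB_expand :
    hookA n k * hookB n k
      = ∑ σ ∈ AF n k, ∑ τ ∈ BF n k,
          MonoidAlgebra.single (σ * τ) ((Equiv.Perm.sign σ : ℤ)) := by
  rw [hookA_eq, hookB_eq, Finset.sum_mul_sum]
  refine Finset.sum_congr rfl fun σ _ => Finset.sum_congr rfl fun τ _ => ?_
  rw [MonoidAlgebra.single_mul_single, mul_one]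

lemma translate_apply (g h : Perm (Fin n)) :
    (MonoidAlgebra.single g (1:ℤ) * (hookA n k * hookB n k)).coeff h
      = ∑ σ ∈ AF n k,
          (if σ⁻¹ * (g⁻¹ * h) ∈ BF n k then ((Equiv.Perm.sign σ : ℤ)) else 0) := by
  rw [hookAB_expand, Finset.mul_sum]
  rw [MonoidAlgebra.coeff_sum, Finsupp.finset_sum_apply]
  refine Finset.sum_congr rfl fun σ _ => ?_
  rw [Finset.mul_sum, MonoidAlgebra.coeff_sum, Finsupp.finset_sum_apply]
  have : ∀ τ ∈ BF n k,
      (MonoidAlgebra.single g (1:ℤ)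
        * MonoidAlgebra.single (σ * τ) ((Equiv.Perm.sign σ : ℤ))).coeff h
      = if τ = σ⁻¹ * (g⁻¹ * h) then ((Equiv.Perm.sign σ : ℤ)) else 0 := by
    intro τ _
    rw [MonoidAlgebra.single_mul_single, one_mul, MonoidAlgebra.coeff_single, Finsupp.single_apply]
    congr 1
    apply propext
    constructor
    · intro he
      rw [← he]
      group
    · intro he
      rw [he]
      group
  rw [Finset.sum_congr rfl this, Finset.sum_ite_eq' (BF n k) (σ⁻¹ * (g⁻¹ * h))
    (fun _ => ((Equiv.Perm.sign σ : ℤ)))]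

lemma pA_pB_eq_one {σ : Perm (Fin n)} (hA : pA n k σ) (hB : pB n k σ) : σ = 1 := by
  ext i
  rcases le_or_gt k ((i : Fin n) : ℕ) with hi | hi
  · rw [hA i hi]; rfl
  rcases Nat.eq_zero_or_pos (i : ℕ) with hi0 | hi0
  · -- i is the zero element
    rcases le_or_gt k ((σ i : Fin n) : ℕ) with hσi | hσi
    · have := σ.injective (hA (σ i) hσi)
      rw [this]; rfl
    rcases Nat.eq_zero_or_pos ((σ i : Fin n) : ℕ) with hσ0 | hσ0
    · rw [Perm.one_apply]
      have hv : ((σ i : Fin n) : ℕ) = ((i : Fin n) : ℕ) := by omega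
      exact hv
    · have := σ.injective (hB (σ i) hσ0 hσi)
      rw [this]; rfl
  · rw [hB i hi0 hi]; rfl

lemma translate_apply_self (g : Perm (Fin n)) :
    (MonoidAlgebra.single g (1:ℤ) * (hookA n k * hookB n k)).coeff g = 1 := by
  rw [translate_apply]
  have h1 : (1 : Perm (Fin n)) ∈ AF n k := mem_AF.2 pA_one
  rw [Finset.sum_eq_single_of_mem 1 h1]
  · simp [mem_BF.2 pB_one]
  · intro σ hσ hne
    rw [if_neg]
    intro hmem
    refine hne (pA_pB_eq_one (mem_AF.1 hσ) ?_)
    have := pB_inv (mem_BF.1 (by simpa using hmem))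
    simpa using this

noncomputable def gS (hk : 2 ≤ k) (hkn : k ≤ n) [NeZero n] (s : Finset (Fin n))
    (hs : s.card = k - 1) (h0 : (0 : Fin n) ∉ s) : Perm (Fin n) :=
  (exists_gS hk hkn s hs h0).choose

lemma gS_zero (hk : 2 ≤ k) (hkn : k ≤ n) [NeZero n] (s : Finset (Fin n))
    (hs : s.card = k - 1) (h0 : (0 : Fin n) ∉ s) : gS hk hkn s hs h0 0 = 0 :=
  (exists_gS hk hkn s hs h0).choose_spec.1

lemma gS_iff (hk : 2 ≤ k) (hkn : k ≤ n) [NeZero n] (s : Finset (Fin n))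
    (hs : s.card = k - 1) (h0 : (0 : Fin n) ∉ s) (i : Fin n) :
    (i : ℕ) < k ↔ gS hk hkn s hs h0 i ∈ insert (0 : Fin n) s :=
  (exists_gS hk hkn s hs h0).choose_spec.2 i

lemma translate_apply_cross (hk : 2 ≤ k) (hkn : k ≤ n) [NeZero n]
    {s s' : Finset (Fin n)} (hs : s.card = k - 1) (h0 : (0 : Fin n) ∉ s)
    (hs' : s'.card = k - 1) (h0' : (0 : Fin n) ∉ s') (hne : s ≠ s') :
    (MonoidAlgebra.single (gS hk hkn s hs h0) (1:ℤ) * (hookA n k * hookB n k)).coeff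
      (gS hk hkn s' hs' h0') = 0 := by
  set g := gS hk hkn s hs h0
  set g' := gS hk hkn s' hs' h0'
  rw [translate_apply]
  refine Finset.sum_eq_zero ?_
  intro σ hσ
  rw [if_neg]
  intro hmem
  have hτ := mem_BF.1 hmem
  have hss' : s' ⊆ s := by
    intro x hx
    have hx0 : x ≠ 0 := fun h => h0' (h ▸ hx)
    set i := g'⁻¹ x with hidef
    have hg'i : g' i = x := g'.apply_symm_apply x
    have hik : (i : ℕ) < k := by
      refine (gS_iff hk hkn s' hs' h0' i).2 ?_
      rw [hg'i]
      exact Finset.mem_insert_of_mem hx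
    have hipos : 1 ≤ (i : ℕ) := by
      rcases Nat.eq_zero_or_pos (i : ℕ) with h | h
      · exfalso
        have : i = 0 := Fin.ext (by simpa using h)
        rw [this, gS_zero] at hg'i
        exact hx0 hg'i.symm
      · exact h
    have hτi : (σ⁻¹ * (g⁻¹ * g')) i = i := hτ i hipos hik
    have hcomp : g (σ i) = g' i := by
      have := congrArg (fun y => g (σ y)) hτi
      simpa [Perm.mul_apply] using this.symm
    have hσik : ((σ i : Fin n) : ℕ) < k := pA_lt (mem_AF.1 hσ) hik
    have : g (σ i) ∈ insert (0 : Fin n) s := (gS_iff hk hkn s hs h0 (σ i)).1 hσik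
    rw [hcomp, hg'i] at this
    rcases Finset.mem_insert.1 this with h | h
    · exact absurd h hx0
    · exact h
  have : s' = s := Finset.eq_of_subset_of_card_le hss' (by rw [hs, hs'])
  exact hne this.symm

lemma V_linearIndependent (hk : 2 ≤ k) (hkn : k ≤ n) [NeZero n] :
    LinearIndependent ℤ
      (fun s : {s : Finset (Fin n) // s.card = k - 1 ∧ (0 : Fin n) ∉ s} =>
        MonoidAlgebra.single (gS hk hkn s.1 s.2.1 s.2.2) (1:ℤ) * (hookA n k * hookB n k)) := by
  rw [Fintype.linearIndependent_iff]
  intro f hsum s'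
  have heval := congrArg (fun x : MonoidAlgebra ℤ (Perm (Fin n)) =>
    x.coeff (gS hk hkn s'.1 s'.2.1 s'.2.2)) hsum
  simp only [MonoidAlgebra.coeff_zero, Finsupp.coe_zero, Pi.zero_apply] at heval
  rw [MonoidAlgebra.coeff_sum, Finsupp.finset_sum_apply] at heval
  rw [Finset.sum_eq_single_of_mem s' (Finset.mem_univ s')] at heval
  · rw [MonoidAlgebra.coeff_smul, Finsupp.smul_apply, translate_apply_self] at heval
    simpa using heval
  · intro s _ hne
    rw [MonoidAlgebra.coeff_smul, Finsupp.smul_apply, translate_apply_cross hk hkn s.2.1 s.2.2 s'.2.1 s'.2.2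
      (fun h => hne (Subtype.ext h)), smul_zero]

lemma card_JK (hkn : k ≤ n) : (JK n k).card = k := by
  have h : JK n k = (Finset.univ : Finset (Fin k)).map (Fin.castLEEmb hkn) := by
    ext x
    constructor
    · intro hx
      have hx' : (x : ℕ) < k := by simpa [JK] using hx
      exact Finset.mem_map.2 ⟨⟨(x : ℕ), hx'⟩, Finset.mem_univ _, Fin.ext rfl⟩
    · intro hx
      obtain ⟨j, -, rfl⟩ := Finset.mem_map.1 hx
      simp only [JK, Finset.mem_filter, Finset.mem_univ, true_and]
      simpa using j.2
  rw [h, Finset.card_map, Finset.card_univ, Fintype.card_fin]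

lemma mem_JK {j : Fin n} : j ∈ JK n k ↔ (j : ℕ) < k := by simp [JK]

/-- every translate with `0` in the image of `{0,…,k-1}` lies in the span of the `V s` -/
lemma step_A (hk : 2 ≤ k) (hkn : k ≤ n) [NeZero n] (g : Perm (Fin n))
    (hex : ∃ i : Fin n, (i : ℕ) < k ∧ g i = 0) :
    MonoidAlgebra.single g (1:ℤ) * (hookA n k * hookB n k) ∈
      Submodule.span ℤ (Set.range
        (fun s : {s : Finset (Fin n) // s.card = k - 1 ∧ (0 : Fin n) ∉ s} =>
          MonoidAlgebra.single (gS hk hkn s.1 s.2.1 s.2.2) (1:ℤ)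
            * (hookA n k * hookB n k))) := by
  obtain ⟨i0, hi0k, hgi0⟩ := hex
  set T : Finset (Fin n) := (JK n k).image g with hTdef
  have hTcard : T.card = k := by
    rw [hTdef, Finset.card_image_of_injective _ g.injective, card_JK hkn]
  have h0T : (0 : Fin n) ∈ T := by
    rw [hTdef, Finset.mem_image]
    exact ⟨i0, mem_JK.2 hi0k, hgi0⟩
  set s : Finset (Fin n) := T.erase 0 with hsdef
  have hs : s.card = k - 1 := by rw [hsdef, Finset.card_erase_of_mem h0T, hTcard]
  have h0s : (0 : Fin n) ∉ s := Finset.notMem_erase _ _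
  have hins : insert (0 : Fin n) s = T := Finset.insert_erase h0T
  set g' := gS hk hkn s hs h0s with hg'def
  have hmemT : ∀ i : Fin n, (i : ℕ) < k ↔ g' i ∈ T := by
    intro i
    rw [← hins]
    exact gS_iff hk hkn s hs h0s i
  set μ := g⁻¹ * g' with hμdef
  have hinv : ∀ x : Fin n, (x : ℕ) < k ↔ ((μ x : Fin n) : ℕ) < k := by
    intro x
    constructor
    · intro hx
      have : g' x ∈ T := (hmemT x).1 hx
      rw [hTdef, Finset.mem_image] at this
      obtain ⟨j, hj, hgj⟩ := this
      have : μ x = j := by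
        rw [hμdef]
        simp only [Perm.mul_apply]
        rw [← hgj]; exact g.symm_apply_apply j
      rw [this]
      exact mem_JK.1 hj
    · intro hx
      by_contra hxk
      have h1 : g' x ∉ T := fun h => hxk ((hmemT x).2 h)
      have h2 : g (μ x) ∈ T := by
        rw [hTdef, Finset.mem_image]
        exact ⟨μ x, mem_JK.2 hx, rfl⟩
      have h3 : g (μ x) = g' x := by
        rw [hμdef]
        simp [Perm.mul_apply]
      rw [h3] at h2
      exact h1 h2
  set σ0 := Equiv.Perm.ofSubtype (μ.subtypePerm (p := fun x : Fin n => (x : ℕ) < k) (fun x => (hinv x).symm)) with hσ0def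
  have hσ0A : pA n k σ0 := by
    intro i hi
    rw [hσ0def]
    exact Equiv.Perm.ofSubtype_apply_of_not_mem _ (by omega)
  have hagree : ∀ i : Fin n, (i : ℕ) < k → (g * σ0) i = g' i := by
    intro i hi
    have h1 : σ0 i = μ i := by
      rw [hσ0def, Equiv.Perm.ofSubtype_apply_of_mem (μ.subtypePerm (p := fun x : Fin n => (x : ℕ) < k) (fun x => (hinv x).symm)) hi,
        Equiv.Perm.subtypePerm_apply]
    rw [Perm.mul_apply, h1, hμdef]
    simp [Perm.mul_apply]
  have e1 : MonoidAlgebra.single g' (1:ℤ) * (hookA n k * hookB n k)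
      = ((Equiv.Perm.sign σ0 : ℤ)) •
          (MonoidAlgebra.single g (1:ℤ) * (hookA n k * hookB n k)) := by
    rw [← translate_col hσ0A]
    exact (translate_eq hagree).symm
  have e2 : MonoidAlgebra.single g (1:ℤ) * (hookA n k * hookB n k)
      = ((Equiv.Perm.sign σ0 : ℤ)) •
          (MonoidAlgebra.single g' (1:ℤ) * (hookA n k * hookB n k)) := by
    rw [e1]
    rcases Int.units_eq_one_or (Equiv.Perm.sign σ0) with hs1 | hs1 <;> simp [hs1]
  rw [e2]
  refine Submodule.smul_mem _ _ (Submodule.subset_span ?_)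
  exact ⟨⟨s, hs, h0s⟩, rfl⟩

lemma span_eq (hk : 2 ≤ k) (hkn : k ≤ n) [NeZero n] :
    Submodule.span ℤ (Set.range (fun g : Perm (Fin n) =>
        MonoidAlgebra.single g (1:ℤ) * (hookA n k * hookB n k)))
      = Submodule.span ℤ (Set.range
        (fun s : {s : Finset (Fin n) // s.card = k - 1 ∧ (0 : Fin n) ∉ s} =>
          MonoidAlgebra.single (gS hk hkn s.1 s.2.1 s.2.2) (1:ℤ)
            * (hookA n k * hookB n k))) := by
  refine le_antisymm ?_ ?_
  · rw [Submodule.span_le]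
    rintro x ⟨g, rfl⟩
    by_cases hex : ∃ i : Fin n, (i : ℕ) < k ∧ g i = 0
    · exact step_A hk hkn g hex
    · push_neg at hex
      set m : Fin n := g⁻¹ 0 with hmdef
      have hgm : g m = 0 := g.apply_symm_apply 0
      have hm : k ≤ (m : ℕ) := by
        by_contra hmk
        push_neg at hmk
        exact (hex m hmk) hgm
      have hx : MonoidAlgebra.single g (1:ℤ) * (hookA n k * hookB n k)
          = ∑ j ∈ JK n k,
              MonoidAlgebra.single (g * Equiv.swap j m) (1:ℤ) * (hookA n k * hookB n k) := by
        conv_lhs => rw [hookAB_rel hk hkn hm]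
        rw [Finset.mul_sum]
        refine Finset.sum_congr rfl ?_
        intro j _
        rw [← mul_assoc, MonoidAlgebra.single_mul_single, mul_one]
      simp only [SetLike.mem_coe]
      show MonoidAlgebra.single g (1:ℤ) * (hookA n k * hookB n k) ∈ _
      rw [hx]
      refine Submodule.sum_mem _ ?_
      intro j hj
      have hjk : (j : ℕ) < k := mem_JK.1 hj
      refine step_A hk hkn _ ⟨j, hjk, ?_⟩
      rw [Perm.mul_apply, Equiv.swap_apply_left, hgm]
  · rw [Submodule.span_le]
    rintro x ⟨s, rfl⟩
    exact Submodule.subset_span ⟨gS hk hkn s.1 s.2.1 s.2.2, rfl⟩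

lemma card_index (hkn : k ≤ n) [NeZero n] :
    Fintype.card {s : Finset (Fin n) // s.card = k - 1 ∧ (0 : Fin n) ∉ s}
      = (n - 1).choose (k - 1) := by
  rw [Fintype.card_subtype]
  have h : (Finset.univ.filter fun s : Finset (Fin n) => s.card = k - 1 ∧ (0 : Fin n) ∉ s)
      = ((Finset.univ : Finset (Fin n)).erase 0).powersetCard (k - 1) := by
    ext s
    simp only [Finset.mem_filter, Finset.mem_univ, true_and, Finset.mem_powersetCard]
    constructor
    · rintro ⟨h1, h2⟩
      exact ⟨fun x hx => Finset.mem_erase.2 ⟨fun h => h2 (h ▸ hx), Finset.mem_univ _⟩, h1⟩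
    · rintro ⟨h1, h2⟩
      exact ⟨h2, fun h0 => (Finset.mem_erase.1 (h1 h0)).1 rfl⟩
  rw [h, Finset.card_powersetCard, Finset.card_erase_of_mem (Finset.mem_univ _),
    Finset.card_univ, Fintype.card_fin]

end HookAux

open HookAux in
/-- The ℤ-submodule of `ℤ[Σₙ]` spanned by the elements `g·a·b`, `g ∈ Σₙ`, is a free
abelian group of rank `binom(n-1, k-1)`. -/
theorem hook_ideal_free_abelian (n k : ℕ) (hk : 2 ≤ k) (hn : k ≤ n) :
    Nonempty
      (↥(Submodule.span ℤ (Set.range fun g : Equiv.Perm (Fin n) =>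
          MonoidAlgebra.single g (1 : ℤ) * (hookA n k * hookB n k))) ≃ₗ[ℤ]
        (Fin (Nat.choose (n - 1) (k - 1)) → ℤ)) := by
  haveI : NeZero n := ⟨by omega⟩
  have hspan := span_eq (n := n) (k := k) hk hn
  have hind := V_linearIndependent (n := n) (k := k) hk hn
  let B := Module.Basis.span hind
  let e1 := LinearEquiv.ofEq _ _ hspan
  let e2 := B.equivFun
  let e3 := LinearEquiv.funCongrLeft ℤ ℤ
    ((Fintype.equivFinOfCardEq (card_index (n := n) (k := k) hn)).symm)
  exact ⟨e1.trans (e2.trans e3)⟩
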